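/- Let $(X,\mu)$ be a measure space, $V \subseteq X$ measurable, $\Lambda$ a finite index set, and let $u_\lambda : X \to \mathbb{C}$ ($\lambda \in \Lambda$) be an orthonormal family in $L^2(V,\mu)$, i.e. $\int_V \overline{u_\lambda(z)}\, u_{\lambda'}(z)\, d\mu(z) = \delta_{\lambda \lambda'}$. Given real weights $w_\lambda$, define the kernel $F(x,y) = \sum_{\lambda \in \Lambda} w_\lambda\, \overline{u_\lambda(x)}\, u_\lambda(y)$. Then for every $N \le |\Lambda|$: $\frac{1}{N!}\int_{V^N} \det\big[F(z_i, z_j)\big]_{1\le i,j \le N}\, d\mu^N(z_1,\dots,z_N) = e_N(w)$, where $e_N(w) = \sum_{S \subseteq \Lambda,\ |S|=N} \prod_{\lambda \in S} w_\lambda$ is the $N$-th elementary symmetric polynomial of the weights. -/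

import Mathlib

open MeasureTheory

private lemma perm_sign_sum {Λ : Type*} [DecidableEq Λ] {N : ℕ} (g : Fin N → Λ) :
    ∑ σ : Equiv.Perm (Fin N), ((Equiv.Perm.sign σ : ℤ) : ℂ) *
        (if ∀ i, g (σ⁻¹ i) = g i then 1 else 0)
      = if Function.Injective g then 1 else 0 := by
  by_cases hg : Function.Injective g
  · rw [if_pos hg, Finset.sum_eq_single (1 : Equiv.Perm (Fin N))]
    · simp
    · intro σ _ hσ
      have hc : ¬ ∀ i, g (σ⁻¹ i) = g i := fun h => hσ <| Equiv.ext fun i =>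
        (hg (by simpa using h (σ i))).symm
      rw [if_neg hc, mul_zero]
    · simp
  · rw [if_neg hg]
    obtain ⟨a, b, hab, hne⟩ := Function.not_injective_iff.mp hg
    have hgs : ∀ x, g (Equiv.swap a b x) = g x := by
      intro x
      rcases eq_or_ne x a with rfl | hxa
      · rw [Equiv.swap_apply_left, hab]
      · rcases eq_or_ne x b with rfl | hxb
        · rw [Equiv.swap_apply_right, hab]
        · rw [Equiv.swap_apply_of_ne_of_ne hxa hxb]
    have hcond : ∀ σ : Equiv.Perm (Fin N),
        (∀ i, g ((σ * Equiv.swap a b)⁻¹ i) = g i) ↔ (∀ i, g (σ⁻¹ i) = g i) := by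
      intro σ
      have : ∀ i, g ((σ * Equiv.swap a b)⁻¹ i) = g (σ⁻¹ i) := by
        intro i
        have : (σ * Equiv.swap a b)⁻¹ i = Equiv.swap a b (σ⁻¹ i) := by
          simp [Equiv.Perm.mul_apply]
        rw [this, hgs]
      exact forall_congr' fun i => by rw [this i]
    refine Finset.sum_involution (fun σ _ => σ * Equiv.swap a b) ?_ ?_
      (fun σ _ => Finset.mem_univ _) ?_
    · intro σ _
      rw [if_congr (hcond σ) rfl rfl]
      have hsign : ((Equiv.Perm.sign (σ * Equiv.swap a b) : ℤ) : ℂ)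
          = -((Equiv.Perm.sign σ : ℤ) : ℂ) := by
        rw [Equiv.Perm.sign_mul, Equiv.Perm.sign_swap hne]
        push_cast
        ring
      rw [hsign]; ring
    · intro σ _ _ h
      have h' : σ * Equiv.swap a b = σ := h
      have h1 : Equiv.swap a b = 1 := mul_left_cancel (a := σ) (by rw [mul_one]; exact h')
      have hba : Equiv.swap a b a = a := by rw [h1]; rfl
      rw [Equiv.swap_apply_left] at hba
      exact hne hba.symm
    · intro σ _
      show (σ * Equiv.swap a b) * Equiv.swap a b = σ
      rw [mul_assoc, Equiv.swap_mul_self, mul_one]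

private lemma fiber_card {Λ : Type*} [DecidableEq Λ] [Fintype Λ] {N : ℕ} (S : Finset Λ)
    (hS : S.card = N) :
    (Finset.univ.filter fun g : Fin N → Λ =>
        Function.Injective g ∧ Finset.image g Finset.univ = S).card = N.factorial := by
  classical
  have e : { x // x ∈ S } ≃ Fin N := S.equivFinOfCardEq hS
  have hcard : (Finset.univ : Finset (Equiv.Perm (Fin N))).card = N.factorial := by
    rw [Finset.card_univ, Fintype.card_perm, Fintype.card_fin]
  rw [← hcard]
  refine Finset.card_bij'
    (i := fun g hg => Equiv.ofBijective
      (fun k => e ⟨g k, by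
        have h2 := (Finset.mem_filter.mp hg).2.2
        exact h2 ▸ Finset.mem_image_of_mem g (Finset.mem_univ k)⟩)
      ?_)
    (j := fun σ _ => fun k => ((e.symm (σ k)) : Λ)) ?_ ?_ ?_ ?_
  · have hinj := (Finset.mem_filter.mp hg).2.1
    refine Finite.injective_iff_bijective.mp ?_
    intro k1 k2 h
    exact hinj (Subtype.ext_iff.mp (e.injective h))
  · intro g hg
    exact Finset.mem_univ _
  · intro σ _
    refine Finset.mem_filter.mpr ⟨Finset.mem_univ _, ?_, ?_⟩
    · exact fun k1 k2 h => σ.injective (e.symm.injective (Subtype.coe_injective h))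
    · refine Finset.eq_of_subset_of_card_le ?_ ?_
      · intro x hx
        obtain ⟨k, _, rfl⟩ := Finset.mem_image.mp hx
        exact (e.symm (σ k)).2
      · rw [Finset.card_image_of_injective _
          (fun k1 k2 h => σ.injective (e.symm.injective (Subtype.coe_injective h))),
          Finset.card_univ, Fintype.card_fin, hS]
  · intro g hg
    funext k
    simp
  · intro σ _
    ext k
    simp

private lemma sum_injective_eq {Λ : Type*} [DecidableEq Λ] [Fintype Λ] {N : ℕ} (v : Λ → ℂ) :
    ∑ g : Fin N → Λ, (if Function.Injective g then 1 else 0) * ∏ i, v (g i)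
      = (N.factorial : ℂ) * ∑ S ∈ Finset.univ.powersetCard N, ∏ lam ∈ S, v lam := by
  classical
  rw [Finset.mul_sum]
  have h1 : ∑ g : Fin N → Λ, (if Function.Injective g then 1 else 0) * ∏ i, v (g i)
      = ∑ g ∈ Finset.univ.filter (fun g : Fin N → Λ => Function.Injective g),
          ∏ i, v (g i) := by
    rw [Finset.sum_filter]
    exact Finset.sum_congr rfl fun g _ => by split <;> simp
  rw [h1]
  have hmaps : ∀ g ∈ Finset.univ.filter (fun g : Fin N → Λ => Function.Injective g),
      Finset.image g Finset.univ ∈ Finset.univ.powersetCard N := by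
    intro g hg
    rw [Finset.mem_powersetCard_univ,
      Finset.card_image_of_injective _ (Finset.mem_filter.mp hg).2,
      Finset.card_univ, Fintype.card_fin]
  rw [← Finset.sum_fiberwise_of_maps_to hmaps]
  refine Finset.sum_congr rfl fun S hS => ?_
  have hfib : (Finset.univ.filter (fun g : Fin N → Λ => Function.Injective g)).filter
      (fun g => Finset.image g Finset.univ = S)
      = Finset.univ.filter fun g : Fin N → Λ =>
          Function.Injective g ∧ Finset.image g Finset.univ = S := by
    rw [Finset.filter_filter]
  have hSc : S.card = N := Finset.mem_powersetCard_univ.mp hS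
  calc ∑ g ∈ (Finset.univ.filter (fun g : Fin N → Λ => Function.Injective g)).filter
        (fun g => Finset.image g Finset.univ = S), ∏ i, v (g i)
      = ∑ g ∈ (Finset.univ.filter (fun g : Fin N → Λ => Function.Injective g)).filter
        (fun g => Finset.image g Finset.univ = S), ∏ lam ∈ S, v lam := by
        refine Finset.sum_congr rfl fun g hg => ?_
        have h2 := Finset.mem_filter.mp hg
        have hinj := (Finset.mem_filter.mp h2.1).2
        rw [← h2.2, Finset.prod_image fun k _ l _ h => hinj h]
    _ = (N.factorial : ℂ) * ∏ lam ∈ S, v lam := by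
        rw [Finset.sum_const, hfib, fiber_card S hSc, nsmul_eq_mul]

/-- For an orthonormal family `u_λ` in `L²(V,μ)` and real weights `w_λ`, with kernel
`F(x,y) = ∑_λ w_λ conj(u_λ(x)) u_λ(y)`, one has
`(1/N!) ∫_{V^N} det[F(zᵢ,zⱼ)] dμ^N = e_N(w)`, the `N`-th elementary symmetric
polynomial of the weights. -/
theorem kernel_determinant_integral {X : Type*} [MeasurableSpace X] (μ : Measure X)
    [SigmaFinite μ] (V : Set X) (hV : MeasurableSet V)
    {Λ : Type*} [Fintype Λ] [DecidableEq Λ] (u : Λ → X → ℂ) (w : Λ → ℝ)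
    (hmeas : ∀ lam, Measurable (u lam))
    (hint : ∀ lam lam', IntegrableOn (fun z => u lam z * (starRingEnd ℂ) (u lam' z)) V μ)
    (horth : ∀ lam lam',
      ∫ z in V, (starRingEnd ℂ) (u lam z) * u lam' z ∂μ = if lam = lam' then 1 else 0)
    (N : ℕ) (hN : N ≤ Fintype.card Λ) :
    ((N.factorial : ℂ))⁻¹ *
        ∫ z in Set.univ.pi (fun _ : Fin N => V),
          Matrix.det (Matrix.of fun i j =>
            ∑ lam, (w lam : ℂ) * (starRingEnd ℂ) (u lam (z i)) * u lam (z j))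
          ∂(Measure.pi fun _ => μ)
      = ∑ S ∈ Finset.univ.powersetCard N, ∏ lam ∈ S, (w lam : ℂ) := by
  classical
  have hw : ∀ a b : Λ, Integrable (fun z => (starRingEnd ℂ) (u a z) * u b z)
      (μ.restrict V) := by
    intro a b
    have := hint b a
    simpa [IntegrableOn, mul_comm] using this
  have hpiμ : (Measure.pi fun _ : Fin N => μ).restrict (Set.univ.pi fun _ : Fin N => V)
      = Measure.pi fun _ : Fin N => μ.restrict V := by
    haveI : SigmaFinite (μ.restrict V) := Restrict.sigmaFinite μ V
    refine (Measure.pi_eq (μ := fun _ : Fin N => μ.restrict V) fun s hs => ?_).symm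
    rw [Measure.restrict_apply (MeasurableSet.univ_pi hs), ← Set.pi_inter_distrib,
      Measure.pi_pi]
    exact Finset.prod_congr rfl fun i _ => (Measure.restrict_apply (hs i)).symm
  letI : MeasureSpace X := ⟨μ.restrict V⟩
  haveI : SigmaFinite (volume : Measure X) := Restrict.sigmaFinite μ V
  have hvol : Measure.pi (fun _ : Fin N => μ.restrict V) = (volume : Measure (Fin N → X)) :=
    rfl
  -- pointwise determinant expansion
  have hdet : ∀ z : Fin N → X,
      Matrix.det (Matrix.of fun i j =>
          ∑ lam, (w lam : ℂ) * (starRingEnd ℂ) (u lam (z i)) * u lam (z j))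
        = ∑ σ : Equiv.Perm (Fin N), ∑ g : Fin N → Λ,
            (((Equiv.Perm.sign σ : ℤ) : ℂ) * ∏ i, (w (g i) : ℂ)) *
              ∏ i, ((starRingEnd ℂ) (u (g (σ⁻¹ i)) (z i)) * u (g i) (z i)) := by
    intro z
    rw [Matrix.det_apply']
    refine Finset.sum_congr rfl fun σ _ => ?_
    simp only [Matrix.of_apply]
    rw [Fintype.prod_sum
      (f := fun i lam => (w lam : ℂ) * (starRingEnd ℂ) (u lam (z (σ i))) * u lam (z i)),
      Finset.mul_sum]
    refine Finset.sum_congr rfl fun g _ => ?_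
    have hre : ∏ i, (starRingEnd ℂ) (u (g i) (z (σ i)))
        = ∏ i, (starRingEnd ℂ) (u (g (σ⁻¹ i)) (z i)) := by
      rw [← Equiv.prod_comp σ (fun i => (starRingEnd ℂ) (u (g (σ⁻¹ i)) (z i)))]
      simp
    rw [Finset.prod_mul_distrib, Finset.prod_mul_distrib, hre, Finset.prod_mul_distrib]
    ring
  rw [hpiμ]
  rw [integral_congr_ae (ae_of_all _ hdet)]
  -- integrability of each term
  have hintg : ∀ (σ : Equiv.Perm (Fin N)) (g : Fin N → Λ),
      Integrable (fun z : Fin N → X =>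
          (((Equiv.Perm.sign σ : ℤ) : ℂ) * ∏ i, (w (g i) : ℂ)) *
            ∏ i, ((starRingEnd ℂ) (u (g (σ⁻¹ i)) (z i)) * u (g i) (z i)))
        (Measure.pi fun _ : Fin N => μ.restrict V) := by
    intro σ g
    refine Integrable.const_mul ?_ _
    rw [hvol]
    exact Integrable.fintype_prod
      (f := fun i x => (starRingEnd ℂ) (u (g (σ⁻¹ i)) x) * u (g i) x) (fun i => hw _ _)
  rw [integral_finset_sum _ (fun σ _ => integrable_finset_sum _ (fun g _ => hintg σ g))]
  have hterm : ∀ (σ : Equiv.Perm (Fin N)) (g : Fin N → Λ),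
      ∫ z : Fin N → X,
          (((Equiv.Perm.sign σ : ℤ) : ℂ) * ∏ i, (w (g i) : ℂ)) *
            ∏ i, ((starRingEnd ℂ) (u (g (σ⁻¹ i)) (z i)) * u (g i) (z i))
          ∂(Measure.pi fun _ : Fin N => μ.restrict V)
        = (((Equiv.Perm.sign σ : ℤ) : ℂ) * ∏ i, (w (g i) : ℂ)) *
            (if ∀ i, g (σ⁻¹ i) = g i then 1 else 0) := by
    intro σ g
    rw [integral_const_mul]
    congr 1
    rw [hvol]
    rw [MeasureTheory.integral_fintype_prod_volume_eq_prod (ι := Fin N)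
      (f := fun i x => (starRingEnd ℂ) (u (g (σ⁻¹ i)) x) * u (g i) x)]
    have : ∀ i : Fin N, (∫ x : X, (starRingEnd ℂ) (u (g (σ⁻¹ i)) x) * u (g i) x)
        = if g (σ⁻¹ i) = g i then 1 else 0 := fun i => horth _ _
    rw [Finset.prod_congr rfl fun i _ => this i, Finset.prod_boole]
    simp
  simp_rw [fun σ => integral_finset_sum (μ := Measure.pi fun _ : Fin N => μ.restrict V)
    Finset.univ (fun g _ => hintg σ g), hterm]
  -- now pure algebra/combinatorics
  rw [Finset.sum_comm]
  have hg : ∀ g : Fin N → Λ,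
      ∑ σ : Equiv.Perm (Fin N),
          (((Equiv.Perm.sign σ : ℤ) : ℂ) * ∏ i, (w (g i) : ℂ)) *
            (if ∀ i, g (σ⁻¹ i) = g i then 1 else 0)
        = (if Function.Injective g then 1 else 0) * ∏ i, (w (g i) : ℂ) := by
    intro g
    rw [← perm_sign_sum g, Finset.sum_mul]
    exact Finset.sum_congr rfl fun σ _ => by ring
  rw [Finset.sum_congr rfl fun g _ => hg g, sum_injective_eq (fun lam => (w lam : ℂ))]
  rw [← mul_assoc, inv_mul_cancel₀ (by exact_mod_cast N.factorial_ne_zero), one_mul]
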